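/- arXiv:2601.07281 — 3 statements merged into one kernel-verified Lean document; each statement's English description precedes it below -/
import Mathlib

section
/- Let X be uniformly distributed on the interval (a, b] and let g*(x) = α + βx. For a split point s ∈ (a, b], define CS(s) = P_L² P_R² (E[g*(X) | X ≤ s] − E[g*(X) | X > s])² where P_L = (s−a)/(b−a) and P_R = (b−s)/(b−a). Then CS(s) is maximized at s = (a+b)/2, with maximum value β²(b−a)²/64. -/
open intervalIntegral

lemma integ_lin (α β u v : ℝ) :
    (∫ x in u..v, (α + β * x)) = α * (v - u) + β * ((v ^ 2 - u ^ 2) / 2) := by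
  rw [intervalIntegral.integral_add intervalIntegrable_const
    (intervalIntegrable_id.const_mul β), intervalIntegral.integral_const,
    intervalIntegral.integral_const_mul, integral_id]
  simp [smul_eq_mul]; ring

/-- for `X ~ Unif(a,b]` and `g*(x) = α + βx`, the covariance-squared
splitting criterion is maximized at the midpoint, with value `β²(b−a)²/64`. -/
theorem CS_linear_maximized_at_midpoint (a b α β : ℝ) (hab : a < b) :
    (∀ s ∈ Set.Ioc a b,
      (((s - a) / (b - a)) ^ 2 * ((b - s) / (b - a)) ^ 2 *
        ((s - a)⁻¹ * (∫ x in a..s, (α + β * x))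
          - (b - s)⁻¹ * (∫ x in s..b, (α + β * x))) ^ 2)
      ≤ ((((a + b) / 2 - a) / (b - a)) ^ 2 * ((b - (a + b) / 2) / (b - a)) ^ 2 *
        (((a + b) / 2 - a)⁻¹ * (∫ x in a..((a + b) / 2), (α + β * x))
          - (b - (a + b) / 2)⁻¹ * (∫ x in ((a + b) / 2)..b, (α + β * x))) ^ 2))
    ∧ ((((a + b) / 2 - a) / (b - a)) ^ 2 * ((b - (a + b) / 2) / (b - a)) ^ 2 *
        (((a + b) / 2 - a)⁻¹ * (∫ x in a..((a + b) / 2), (α + β * x))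
          - (b - (a + b) / 2)⁻¹ * (∫ x in ((a + b) / 2)..b, (α + β * x))) ^ 2)
      = β ^ 2 * (b - a) ^ 2 / 64 := by
  have hba : b - a ≠ 0 := sub_ne_zero.mpr hab.ne'
  have hm1 : (a + b) / 2 - a = (b - a) / 2 := by ring
  have hm2 : b - (a + b) / 2 = (b - a) / 2 := by ring
  have hmid :
      ((((a + b) / 2 - a) / (b - a)) ^ 2 * ((b - (a + b) / 2) / (b - a)) ^ 2 *
        (((a + b) / 2 - a)⁻¹ * (∫ x in a..((a + b) / 2), (α + β * x))
          - (b - (a + b) / 2)⁻¹ * (∫ x in ((a + b) / 2)..b, (α + β * x))) ^ 2)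
      = β ^ 2 * (b - a) ^ 2 / 64 := by
    rw [integ_lin, integ_lin, hm1, hm2]
    field_simp
    ring
  refine ⟨fun s hs => ?_, hmid⟩
  rw [hmid, integ_lin, integ_lin]
  obtain ⟨has, hsb⟩ := hs
  have h1 : s - a ≠ 0 := sub_ne_zero.mpr has.ne'
  rcases hsb.lt_or_eq with hsb' | heq
  swap
  · subst heq
    simp only [sub_self, zero_div]
    have : (0:ℝ) ^ 2 = 0 := by norm_num
    rw [this, mul_zero, zero_mul]
    positivity
  · have h2 : b - s ≠ 0 := sub_ne_zero.mpr hsb'.ne'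
    have key : (s - a)⁻¹ * (α * (s - a) + β * ((s ^ 2 - a ^ 2) / 2))
        - (b - s)⁻¹ * (α * (b - s) + β * ((b ^ 2 - s ^ 2) / 2))
        = β * (a - b) / 2 := by
      field_simp
      ring
    rw [key]
    have hprod : (s - a) * (b - s) ≤ (b - a) ^ 2 / 4 := by nlinarith [sq_nonneg (b + a - 2 * s)]
    have hprod0 : 0 ≤ (s - a) * (b - s) :=
      mul_nonneg (by linarith) (by linarith)
    rw [div_pow, div_pow, div_pow, div_mul_div_comm, div_mul_div_comm,
      div_le_div_iff₀ (by positivity) (by norm_num)]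
    have h3 := mul_le_mul hprod hprod hprod0 (by positivity)
    nlinarith [h3, sq_nonneg (β * (b - a)), mul_nonneg (sq_nonneg β) (sq_nonneg (b - a))]
end

section
/- Suppose a nonnegative real sequence (E_K)_{K≥0} satisfies E_K ≤ E_{K−1}(1 − E_{K−1}/V) for all K ≥ 1, where V > 0, and E_0 ≤ V. Then E_K ≤ V/(K+3) for all K ≥ 1. -/
/-- a nonnegative sequence with `E_K ≤ E_{K−1}(1 − E_{K−1}/V)` and
`E_0 ≤ V` satisfies `E_K ≤ V/(K+3)` for all `K ≥ 1`. -/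
theorem recursion_rate_bound (V : ℝ) (hV : 0 < V) (E : ℕ → ℝ)
    (hnonneg : ∀ K, 0 ≤ E K)
    (hrec : ∀ K, 1 ≤ K → E K ≤ E (K - 1) * (1 - E (K - 1) / V))
    (h0 : E 0 ≤ V) :
    ∀ K, 1 ≤ K → E K ≤ V / ((K : ℝ) + 3) := by
  intro K hK
  induction K, hK using Nat.le_induction with
  | base =>
    have h := hrec 1 le_rfl
    simp only [Nat.sub_self] at h
    have h0' := hnonneg 0
    have heq : E 0 * (1 - E 0 / V) = E 0 * (V - E 0) / V := by
      field_simp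
    have : E 0 * (1 - E 0 / V) ≤ V / 4 := by
      rw [heq, div_le_div_iff₀ hV (by norm_num : (0:ℝ) < 4)]
      nlinarith [sq_nonneg (2 * E 0 - V)]
    norm_num
    linarith
  | succ n hn ih =>
    have ihn := ih
    have h := hrec (n + 1) (by omega)
    simp only [Nat.add_sub_cancel] at h
    have hEn := hnonneg n
    have hle : (V : ℝ) / (n + 3) ≤ V := by
      rw [div_le_iff₀ (by positivity)]
      nlinarith
    have key : E n * (1 - E n / V) ≤ V / ((n : ℝ) + 1 + 3) := by
      have heq : E n * (1 - E n / V) = E n * (V - E n) / V := by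
        field_simp
      have h2 : E n * ((n:ℝ) + 3) ≤ V := by
        rw [le_div_iff₀ (by positivity)] at ihn; linarith
      rw [heq, div_le_div_iff₀ hV (by positivity)]
      have hn1 : (1:ℝ) ≤ (n:ℝ) := by exact_mod_cast hn
      nlinarith [sq_nonneg (V - ((n:ℝ)+3) * E n), sq_nonneg (E n),
        mul_nonneg (mul_nonneg (sub_nonneg.2 h2) hEn) (by linarith : (0:ℝ) ≤ (n:ℝ)+2)]
    push_cast
    linarith
end

section
/- Let (E_K)_{K≥0} be a nonincreasing real sequence with the property that whenever E_{K−1} ≥ 0, E_K ≤ E_{K−1} − E_{K−1}²/V for some fixed V > 0. Then for every K ≥ 1, E_K ≤ V/(K+3). -/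
lemma quad_step (V c x : ℝ) (hV : 0 < V) (hc : 4 ≤ c) (hx0 : 0 ≤ x)
    (hx : x ≤ V / c) : x - x ^ 2 / V ≤ V / (c + 1) := by
  have hc0 : (0:ℝ) < c := by linarith
  have hc1 : (0:ℝ) < c + 1 := by linarith
  rw [le_div_iff₀ hc0] at hx
  have key : x - x ^ 2 / V = (x * V - x ^ 2) / V := by field_simp
  rw [key, div_le_div_iff₀ hV hc1]
  nlinarith [mul_nonneg (sub_nonneg.2 hx) hx0, sq_nonneg (V - x * c),
    mul_nonneg (sub_nonneg.2 hx) (sub_nonneg.2 hx), sq_nonneg x,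
    mul_nonneg (mul_nonneg hx0 hx0) (by linarith : (0:ℝ) ≤ c - 4)]

/-- a nonincreasing sequence satisfying the quadratic decrement
whenever the previous term is nonnegative obeys `E_K ≤ V/(K+3)` for `K ≥ 1`. -/
theorem recursion_rate_bound_monotone (V : ℝ) (hV : 0 < V) (E : ℕ → ℝ)
    (hmono : Antitone E)
    (hrec : ∀ K, 1 ≤ K → 0 ≤ E (K - 1) → E K ≤ E (K - 1) - (E (K - 1)) ^ 2 / V) :
    ∀ K, 1 ≤ K → E K ≤ V / ((K : ℝ) + 3) := by
  intro K hK
  induction K, hK using Nat.le_induction with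
  | base =>
    by_cases h0 : 0 ≤ E 0
    · have h := hrec 1 le_rfl (by simpa using h0)
      simp only [Nat.sub_self] at h
      have : E 0 - E 0 ^ 2 / V ≤ V / 4 := by
        rw [le_div_iff₀ (by norm_num : (0:ℝ) < 4)]
        have := div_nonneg (sq_nonneg (E 0)) hV.le
        have h4 : E 0 ^ 2 / V * V = E 0 ^ 2 := div_mul_cancel₀ _ hV.ne'
        nlinarith [sq_nonneg (2 * E 0 - V)]
      calc E 1 ≤ _ := h
        _ ≤ V / 4 := this
        _ = V / ((1:ℕ) + 3 : ℝ) := by norm_num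
    · push_neg at h0
      have : E 1 ≤ E 0 := hmono (by norm_num)
      have : E 1 < 0 := lt_of_le_of_lt this h0
      have : (0:ℝ) ≤ V / ((1:ℕ) + 3 : ℝ) := by positivity
      linarith
  | succ k hk ih =>
    by_cases h0 : 0 ≤ E k
    · have h := hrec (k + 1) (by omega) (by simpa using h0)
      simp only [Nat.add_sub_cancel] at h
      have hstep : E k - E k ^ 2 / V ≤ V / ((k : ℝ) + 3 + 1) := by
        apply quad_step V ((k:ℝ)+3) (E k) hV _ h0 ih
        have : (1:ℝ) ≤ (k:ℝ) := by exact_mod_cast hk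
        linarith
      calc E (k + 1) ≤ _ := h
        _ ≤ V / ((k : ℝ) + 3 + 1) := hstep
        _ = V / (((k+1 : ℕ) : ℝ) + 3) := by push_cast; ring_nf
    · push_neg at h0
      have : E (k + 1) ≤ E k := hmono (by omega)
      have hpos : (0:ℝ) ≤ V / (((k+1:ℕ):ℝ) + 3) := by positivity
      linarith
end
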